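/- Let n and k be positive integers with k ≤ n − ⌈n/3⌉. Then the k-synchronous bondage number of the path on n vertices is: Sb_k(P_n) = ⌊(3k−1)/2⌋ if n ≡ 0 (mod 3); Sb_k(P_n) = ⌊(3k+1)/2⌋ if n ≡ 1 (mod 3); and Sb_k(P_n) = ⌈(3k−1)/2⌉ if n ≡ 2 (mod 3). -/

import Mathlib

/-- A finite set of vertices `D` is a dominating set of `G` if every vertex
is in `D` or adjacent to a vertex in `D`. -/
def SimpleGraph.IsDominatingSet {V : Type*} (G : SimpleGraph V) (D : Finset V) : Prop :=
  ∀ v : V, v ∈ D ∨ ∃ u ∈ D, G.Adj u v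

/-- The domination number of `G`: the minimum cardinality of a dominating set. -/
noncomputable def SimpleGraph.domNum {V : Type*} (G : SimpleGraph V) : ℕ :=
  sInf {n : ℕ | ∃ D : Finset V, G.IsDominatingSet D ∧ D.card = n}

/-- The `k`-synchronous bondage number of `G`: the minimum cardinality of a set of edges
whose deletion increases the domination number by exactly `k`.  (`Sb 1` is the classical
bondage number.) -/
noncomputable def SimpleGraph.synchBondage {V : Type*} (G : SimpleGraph V) (k : ℕ) : ℕ :=
  sInf {m : ℕ | ∃ E' : Finset (Sym2 V), ↑E' ⊆ G.edgeSet ∧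
    (G.deleteEdges ↑E').domNum = G.domNum + k ∧ E'.card = m}


namespace PathBondage

open Finset


def adjC (C : Finset ℕ) (a b : ℕ) : Prop :=
  (a + 1 = b ∧ a ∉ C) ∨ (b + 1 = a ∧ b ∉ C)

instance (C : Finset ℕ) (a b : ℕ) : Decidable (adjC C a b) := by
  unfold adjC; infer_instance

lemma card_filter_val (n a b : ℕ) (hb : b ≤ n) :
    ((Finset.univ : Finset (Fin n)).filter (fun v => a ≤ v.val ∧ v.val < b)).card = b - a := by
  rw [← Nat.card_Ico a b]
  apply Finset.card_bij (fun v _ => v.val)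
  · intro v hv; simp only [mem_filter] at hv; simp only [mem_Ico]; omega
  · intro v _ w _ h; exact Fin.ext h
  · intro i hi
    simp only [mem_Ico] at hi
    exact ⟨⟨i, by omega⟩, by simp only [mem_filter, mem_univ, true_and]; omega, rfl⟩

lemma LB (n a b : ℕ) (hb : b ≤ n) (C : Finset ℕ) (D : Finset (Fin n))
    (hcross : ∀ u v : Fin n, adjC C u.val v.val → a ≤ v.val → v.val < b →
      a ≤ u.val ∧ u.val < b)
    (hD : ∀ v : Fin n, v ∈ D ∨ ∃ u ∈ D, adjC C u.val v.val) :
    b - a ≤ 3 * (D.filter (fun v => a ≤ v.val ∧ v.val < b)).card := by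
  classical
  set DI := D.filter (fun v => a ≤ v.val ∧ v.val < b) with hDI
  set N : Fin n → Finset (Fin n) :=
    fun u => Finset.univ.filter (fun w : Fin n => u.val ≤ w.val + 1 ∧ w.val ≤ u.val + 1) with hN
  have hsub : (Finset.univ.filter (fun v : Fin n => a ≤ v.val ∧ v.val < b)) ⊆
      DI.biUnion N := by
    intro v hv
    simp only [mem_filter, mem_univ, true_and] at hv
    rcases hD v with h | ⟨u, hu, hadj⟩
    · refine Finset.mem_biUnion.2 ⟨v, ?_, ?_⟩
      · simp only [hDI, mem_filter]; exact ⟨h, hv⟩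
      · simp only [hN, mem_filter, mem_univ, true_and]; omega
    · refine Finset.mem_biUnion.2 ⟨u, ?_, ?_⟩
      · simp only [hDI, mem_filter]; exact ⟨hu, hcross u v hadj hv.1 hv.2⟩
      · simp only [hN, mem_filter, mem_univ, true_and]
        rcases hadj with ⟨h1, _⟩ | ⟨h1, _⟩ <;> omega
  have hNcard : ∀ u : Fin n, (N u).card ≤ 3 := by
    intro u
    have : (N u).card ≤ (Finset.Icc (u.val - 1) (u.val + 1)).card := by
      apply Finset.card_le_card_of_injOn Fin.val
      · intro w hw
        simp only [hN, mem_filter, mem_univ, true_and] at hw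
        simp only [Finset.mem_coe, Finset.coe_filter, Set.mem_setOf_eq, mem_filter, mem_univ, true_and, Finset.mem_Icc] at hw ⊢; omega
      · intro x _ y _ h; exact Fin.ext h
    rw [Nat.card_Icc] at this; omega
  calc b - a = (Finset.univ.filter (fun v : Fin n => a ≤ v.val ∧ v.val < b)).card :=
        (card_filter_val n a b hb).symm
    _ ≤ (DI.biUnion N).card := Finset.card_le_card hsub
    _ ≤ ∑ u ∈ DI, (N u).card := Finset.card_biUnion_le
    _ ≤ ∑ _u ∈ DI, 3 := Finset.sum_le_sum (fun u _ => hNcard u)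
    _ = 3 * DI.card := by rw [Finset.sum_const, smul_eq_mul, mul_comm]


lemma pathDom : ∀ n : ℕ, 1 ≤ n → ∃ D : Finset (Fin n),
    (∀ v : Fin n, v ∈ D ∨ ∃ u ∈ D, (u.val + 1 = v.val ∨ v.val + 1 = u.val)) ∧
    D.card = (n + 2) / 3 := by
  intro n
  induction n using Nat.strong_induction_on with
  | _ n IH =>
  intro hn
  by_cases h4 : n < 4
  · interval_cases n
    · exact ⟨{0}, by decide, by decide⟩
    · exact ⟨{0}, by decide, by decide⟩
    · exact ⟨{1}, by decide, by decide⟩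
  · obtain ⟨D', hdom', hcard'⟩ := IH (n - 3) (by omega) (by omega)
    have hle : n - 3 ≤ n := by omega
    refine ⟨D'.image (Fin.castLE hle) ∪ {⟨n - 2, by omega⟩}, ?_, ?_⟩
    · intro v
      by_cases hv : v.val < n - 3
      · rcases hdom' ⟨v.val, hv⟩ with h | ⟨u, hu, hadj⟩
        · left
          refine Finset.mem_union_left _ (Finset.mem_image.2 ⟨⟨v.val, hv⟩, h, ?_⟩)
          exact Fin.ext rfl
        · right
          refine ⟨Fin.castLE hle u, Finset.mem_union_left _ (Finset.mem_image.2 ⟨u, hu, rfl⟩), ?_⟩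
          simpa using hadj
      · by_cases hv2 : v.val = n - 2
        · left
          exact Finset.mem_union_right _ (by simp [Fin.ext_iff, hv2])
        · right
          refine ⟨⟨n - 2, by omega⟩, Finset.mem_union_right _ (by simp), ?_⟩
          have := v.isLt
          simp only []
          omega
    · rw [Finset.card_union_of_disjoint, Finset.card_image_of_injective _ (Fin.castLE_injective hle),
        hcard', Finset.card_singleton]
      · omega
      · rw [Finset.disjoint_right]
        intro x hx hx2
        simp only [Finset.mem_singleton] at hx
        obtain ⟨y, _, rfl⟩ := Finset.mem_image.1 hx2
        have h5 := y.isLt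
        have h6 : (Fin.castLE hle y).val = n - 2 := by rw [hx]
        simp only [Fin.coe_castLE] at h6
        omega

lemma EX : ∀ n : ℕ, ∀ C : Finset ℕ, 1 ≤ n → ∃ D : Finset (Fin n),
    (∀ v : Fin n, v ∈ D ∨ ∃ u ∈ D, adjC C u.val v.val) ∧
    3 * D.card ≤ n + 2 * ((C.filter (· < n - 1)).card + 1) := by
  intro n
  induction n using Nat.strong_induction_on with
  | _ n IH =>
  intro C hn
  by_cases hF : (C.filter (· < n - 1)).Nonempty
  · -- there is a cut strictly inside
    set F := C.filter (· < n - 1) with hFdef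
    set i₀ := F.min' hF with hi₀def
    have hi₀ : i₀ ∈ C ∧ i₀ < n - 1 := Finset.mem_filter.1 (F.min'_mem hF)
    have hmin : ∀ c ∈ C, c < n - 1 → i₀ ≤ c := by
      intro c hc hc2
      exact F.min'_le c (Finset.mem_filter.2 ⟨hc, hc2⟩)
    set L := i₀ + 1 with hLdef
    have hL : L ≤ n - 1 := by omega
    obtain ⟨D₀, hdom₀, hcard₀⟩ := pathDom L (by omega)
    set C' := (C.filter (fun c => L ≤ c)).image (fun c => c - L) with hC'def
    have hC' : ∀ j : ℕ, j ∈ C' ↔ j + L ∈ C := by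
      intro j
      rw [hC'def]
      simp only [Finset.mem_image, mem_filter]
      constructor
      · rintro ⟨c, ⟨hc, hcL⟩, rfl⟩
        have : c - L + L = c := by omega
        rw [this]; exact hc
      · intro h
        exact ⟨j + L, ⟨h, by omega⟩, by omega⟩
    obtain ⟨D', hdom', hcard'⟩ := IH (n - L) (by omega) C' (by omega)
    have hcast : L ≤ n := by omega
    set f : Fin (n - L) → Fin n := fun j => ⟨j.val + L, by have := j.isLt; omega⟩ with hf
    refine ⟨D₀.image (Fin.castLE hcast) ∪ D'.image f, ?_, ?_⟩
    · intro v
      by_cases hv : v.val < L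
      · rcases hdom₀ ⟨v.val, hv⟩ with h | ⟨u, hu, hadj⟩
        · left
          exact Finset.mem_union_left _ (Finset.mem_image.2 ⟨⟨v.val, hv⟩, h, Fin.ext rfl⟩)
        · right
          refine ⟨Fin.castLE hcast u, Finset.mem_union_left _ (Finset.mem_image.2 ⟨u, hu, rfl⟩), ?_⟩
          have hu2 := u.isLt
          simp only [Fin.coe_castLE] at *
          have hnotC : ∀ z : ℕ, z + 1 < L → z ∉ C := by
            intro z hz hzC
            have := hmin z hzC (by omega)
            omega
          rcases hadj with h1 | h1
          · exact Or.inl ⟨h1, hnotC _ (by omega)⟩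
          · exact Or.inr ⟨h1, hnotC _ (by omega)⟩
      · rcases hdom' ⟨v.val - L, by have := v.isLt; omega⟩ with h | ⟨u, hu, hadj⟩
        · left
          refine Finset.mem_union_right _ (Finset.mem_image.2 ⟨_, h, ?_⟩)
          rw [hf]; exact Fin.ext (by simp; omega)
        · right
          refine ⟨f u, Finset.mem_union_right _ (Finset.mem_image.2 ⟨u, hu, rfl⟩), ?_⟩
          rw [hf]
          simp only []
          rcases hadj with ⟨h1, h2⟩ | ⟨h1, h2⟩
          · refine Or.inl ⟨by simp only [] at h1 ⊢; omega, ?_⟩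
            intro hc
            exact h2 ((hC' u.val).2 hc)
          · refine Or.inr ⟨by simp only [] at h1 ⊢; omega, ?_⟩
            intro hc
            apply h2
            rw [hC']
            have : v.val - L + L = v.val := by omega
            rw [this]
            exact hc
    · have hdisj : Disjoint (D₀.image (Fin.castLE hcast)) (D'.image f) := by
        rw [Finset.disjoint_left]
        rintro x hx hx2
        obtain ⟨y, _, rfl⟩ := Finset.mem_image.1 hx
        obtain ⟨z, _, hz⟩ := Finset.mem_image.1 hx2
        have h1 := y.isLt
        have h2 : (f z).val = (Fin.castLE hcast y).val := by rw [hz]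
        rw [hf] at h2
        simp only [Fin.coe_castLE] at h2
        omega
      rw [Finset.card_union_of_disjoint hdisj,
        Finset.card_image_of_injective _ (Fin.castLE_injective hcast),
        Finset.card_image_of_injective, hcard₀]
      · -- arithmetic
        have hsub : ((C'.filter (· < n - L - 1)).image (fun j => j + L)) ⊆ F.erase i₀ := by
          intro x hx
          obtain ⟨j, hj, rfl⟩ := Finset.mem_image.1 hx
          rw [mem_filter] at hj
          rw [Finset.mem_erase]
          exact ⟨by omega, Finset.mem_filter.2 ⟨(hC' j).1 hj.1, by omega⟩⟩
        have hcardsub : (C'.filter (· < n - L - 1)).card ≤ F.card - 1 := by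
          have h1 : ((C'.filter (· < n - L - 1)).image (fun j => j + L)).card ≤ (F.erase i₀).card :=
            Finset.card_le_card hsub
          rw [Finset.card_image_of_injective _ (add_left_injective L)] at h1
          have hmem : i₀ ∈ F := Finset.mem_filter.2 ⟨hi₀.1, hi₀.2⟩
          rw [Finset.card_erase_of_mem hmem] at h1
          exact h1
        have hFpos : 1 ≤ F.card := Finset.card_pos.2 hF
        have harith : (C'.filter (· < n - L - 1)).card = (C'.filter (· < (n - L) - 1)).card := rfl
        omega
      · intro x y hxy
        rw [hf] at hxy
        have : x.val + L = y.val + L := by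
          have := congrArg Fin.val hxy
          simpa using this
        exact Fin.ext (by omega)
  · -- no cut inside: plain path
    obtain ⟨D, hdom, hcard⟩ := pathDom n hn
    refine ⟨D, ?_, by omega⟩
    intro v
    rcases hdom v with h | ⟨u, hu, hadj⟩
    · exact Or.inl h
    · right
      refine ⟨u, hu, ?_⟩
      have hnotC : ∀ z : ℕ, z + 1 < n → z ∉ C := by
        intro z hz hzC
        exact hF ⟨z, by rw [mem_filter]; exact ⟨hzC, by simpa using by omega⟩⟩
      have h1 := u.isLt
      have h2 := v.isLt
      rcases hadj with h3 | h3
      · exact Or.inl ⟨h3, hnotC _ (by omega)⟩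
      · exact Or.inr ⟨h3, hnotC _ (by omega)⟩

lemma exact_ub (n m : ℕ) (hm : m + 1 ≤ n) :
    ∃ D : Finset (Fin n),
      (∀ v : Fin n, v ∈ D ∨ ∃ u ∈ D, adjC (Finset.range m) u.val v.val) ∧
      D.card = m + (n - m + 2) / 3 := by
  obtain ⟨D₀, hdom₀, hcard₀⟩ := pathDom (n - m) (by omega)
  set f : Fin (n - m) → Fin n := fun j => ⟨j.val + m, by have := j.isLt; omega⟩ with hf
  refine ⟨(Finset.univ.filter (fun v : Fin n => 0 ≤ v.val ∧ v.val < m)) ∪ D₀.image f, ?_, ?_⟩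
  · intro v
    by_cases hv : v.val < m
    · left
      exact Finset.mem_union_left _ (by simp [hv])
    · rcases hdom₀ ⟨v.val - m, by have := v.isLt; omega⟩ with h | ⟨u, hu, hadj⟩
      · left
        refine Finset.mem_union_right _ (Finset.mem_image.2 ⟨_, h, ?_⟩)
        rw [hf]; exact Fin.ext (by simp; omega)
      · right
        refine ⟨f u, Finset.mem_union_right _ (Finset.mem_image.2 ⟨u, hu, rfl⟩), ?_⟩
        rw [hf]
        simp only [] at hadj ⊢
        rcases hadj with h1 | h1
        · exact Or.inl ⟨by omega, by simp only [Finset.mem_range]; omega⟩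
        · exact Or.inr ⟨by omega, by simp only [Finset.mem_range]; omega⟩
  · have hdisj : Disjoint (Finset.univ.filter (fun v : Fin n => 0 ≤ v.val ∧ v.val < m))
        (D₀.image f) := by
      rw [Finset.disjoint_left]
      rintro x hx hx2
      obtain ⟨y, _, rfl⟩ := Finset.mem_image.1 hx2
      rw [mem_filter] at hx
      rw [hf] at hx
      simp only [] at hx
      omega
    rw [Finset.card_union_of_disjoint hdisj, card_filter_val n 0 m (by omega),
      Finset.card_image_of_injective, hcard₀]
    · omega
    · intro x y hxy
      rw [hf] at hxy
      have := congrArg Fin.val hxy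
      simp only [] at this
      exact Fin.ext (by omega)

lemma exact_lb (n m : ℕ) (hm : m + 1 ≤ n) (D : Finset (Fin n))
    (hD : ∀ v : Fin n, v ∈ D ∨ ∃ u ∈ D, adjC (Finset.range m) u.val v.val) :
    m + (n - m + 2) / 3 ≤ D.card := by
  classical
  have hhead : ∀ v : Fin n, v.val < m → v ∈ D := by
    intro v hv
    rcases hD v with h | ⟨u, hu, hadj⟩
    · exact h
    · exfalso
      have := u.isLt
      rcases hadj with ⟨h1, h2⟩ | ⟨h1, h2⟩ <;>
        simp only [Finset.mem_range] at h2 <;> omega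
  have h1 : m ≤ (D.filter (fun v => 0 ≤ v.val ∧ v.val < m)).card := by
    have heq := card_filter_val n 0 m (by omega)
    have hle : ((Finset.univ : Finset (Fin n)).filter (fun v => 0 ≤ v.val ∧ v.val < m)) ⊆
        D.filter (fun v => 0 ≤ v.val ∧ v.val < m) := by
      intro v hv
      rw [mem_filter] at hv ⊢
      exact ⟨hhead v hv.2.2, hv.2⟩
    have := Finset.card_le_card hle
    omega
  have h2 : n - m ≤ 3 * (D.filter (fun v => m ≤ v.val ∧ v.val < n)).card := by
    apply LB n m n le_rfl (Finset.range m) D _ hD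
    intro u v hadj h3 _
    refine ⟨?_, u.isLt⟩
    rcases hadj with ⟨ha, hb⟩ | ⟨ha, hb⟩ <;> simp only [Finset.mem_range] at hb <;> omega
  have h3 : (D.filter (fun v => 0 ≤ v.val ∧ v.val < m)).card
      + (D.filter (fun v => m ≤ v.val ∧ v.val < n)).card ≤ D.card := by
    rw [← Finset.card_union_of_disjoint]
    · apply Finset.card_le_card
      intro x hx
      rcases Finset.mem_union.1 hx with h | h <;> exact (Finset.mem_filter.1 h).1
    · rw [Finset.disjoint_left]
      intro x hx hx2
      rw [mem_filter] at hx hx2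
      omega
  omega

lemma domNum_eq_of {n : ℕ} (H : SimpleGraph (Fin n)) (g : ℕ) (D₀ : Finset (Fin n))
    (h1 : H.IsDominatingSet D₀) (h2 : D₀.card = g)
    (h3 : ∀ D : Finset (Fin n), H.IsDominatingSet D → g ≤ D.card) :
    H.domNum = g := by
  unfold SimpleGraph.domNum
  apply le_antisymm
  · exact Nat.sInf_le ⟨D₀, h1, h2⟩
  · refine le_csInf ⟨D₀.card, ⟨D₀, h1, rfl⟩⟩ ?_
    rintro m ⟨D, hD, rfl⟩
    exact h3 D hD

lemma domNum_le {n : ℕ} (H : SimpleGraph (Fin n)) (D : Finset (Fin n))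
    (hD : H.IsDominatingSet D) : H.domNum ≤ D.card :=
  Nat.sInf_le ⟨D, hD, rfl⟩

lemma exact_domNum (n m : ℕ) (hm : m + 1 ≤ n) (H : SimpleGraph (Fin n))
    (hH : ∀ u v : Fin n, H.Adj u v ↔ adjC (Finset.range m) u.val v.val) :
    H.domNum = m + (n - m + 2) / 3 := by
  obtain ⟨D₀, hdom₀, hcard₀⟩ := exact_ub n m hm
  apply domNum_eq_of H _ D₀ _ hcard₀
  · intro D hD
    apply exact_lb n m hm D
    intro v
    rcases hD v with h | ⟨u, hu, hadj⟩
    · exact Or.inl h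
    · exact Or.inr ⟨u, hu, (hH u v).1 hadj⟩
  · intro v
    rcases hdom₀ v with h | ⟨u, hu, hadj⟩
    · exact Or.inl h
    · exact Or.inr ⟨u, hu, (hH u v).2 hadj⟩

lemma edge_rep (n : ℕ) (e : Sym2 (Fin n)) (he : e ∈ (SimpleGraph.pathGraph n).edgeSet) :
    ∃ a b : Fin n, a.val + 1 = b.val ∧ e = s(a, b) := by
  induction e using Sym2.ind with
  | _ a b =>
    rw [SimpleGraph.mem_edgeSet, SimpleGraph.pathGraph_adj] at he
    rcases he with h | h
    · exact ⟨a, b, h, rfl⟩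
    · exact ⟨b, a, h, Sym2.eq_swap.symm⟩

lemma deleteEdges_adjC (n : ℕ) (E' : Finset (Sym2 (Fin n))) (C : Finset ℕ)
    (hkey : ∀ u v : Fin n, u.val + 1 = v.val → (s(u, v) ∈ E' ↔ u.val ∈ C)) :
    ∀ u v : Fin n, ((SimpleGraph.pathGraph n).deleteEdges ↑E').Adj u v ↔ adjC C u.val v.val := by
  intro u v
  rw [SimpleGraph.deleteEdges_adj, SimpleGraph.pathGraph_adj]
  constructor
  · rintro ⟨h | h, hne⟩
    · exact Or.inl ⟨h, fun hc => hne (Finset.mem_coe.2 ((hkey u v h).2 hc))⟩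
    · refine Or.inr ⟨h, fun hc => hne ?_⟩
      rw [Sym2.eq_swap]
      exact Finset.mem_coe.2 ((hkey v u h).2 hc)
  · rintro (⟨h, hc⟩ | ⟨h, hc⟩)
    · exact ⟨Or.inl h, fun hne => hc ((hkey u v h).1 (Finset.mem_coe.1 hne))⟩
    · refine ⟨Or.inr h, fun hne => hc ((hkey v u h).1 (Finset.mem_coe.1 ?_))⟩
      rw [Sym2.eq_swap]
      exact hne


lemma domNum_path (n : ℕ) (hn : 1 ≤ n) : (SimpleGraph.pathGraph n).domNum = (n + 2) / 3 := by
  have h := exact_domNum n 0 (by omega) (SimpleGraph.pathGraph n) ?_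
  · simpa using h
  · intro u v
    rw [SimpleGraph.pathGraph_adj]
    simp [adjC]

lemma helper (n k M : ℕ) (hn : 1 ≤ n) (hM1 : M + 1 ≤ n)
    (h1 : M + (n - M + 2) / 3 = (n + 2) / 3 + k)
    (h2 : ∀ m : ℕ, 3 * ((n + 2) / 3 + k) ≤ n + 2 * m + 2 → M ≤ m) :
    (SimpleGraph.pathGraph n).synchBondage k = M := by
  classical
  have hpath := domNum_path n hn
  set E₀ : Finset (Sym2 (Fin n)) :=
    (Finset.range M).attach.image
      (fun x => s((⟨x.1, by have := Finset.mem_range.1 x.2; omega⟩ : Fin n),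
                  (⟨x.1 + 1, by have := Finset.mem_range.1 x.2; omega⟩ : Fin n))) with hE₀
  have hmemE : ∀ u v : Fin n, u.val + 1 = v.val → (s(u, v) ∈ E₀ ↔ u.val ∈ Finset.range M) := by
    intro u v huv
    rw [Finset.mem_range, hE₀]
    constructor
    · intro h
      obtain ⟨x, _, hx⟩ := Finset.mem_image.1 h
      have hx2 := Finset.mem_range.1 x.2
      rcases Sym2.eq_iff.1 hx with ⟨ha, hb⟩ | ⟨ha, hb⟩
      · have h3 := congrArg Fin.val ha
        simp only [] at h3
        omega
      · have h3 := congrArg Fin.val ha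
        have h4 := congrArg Fin.val hb
        simp only [] at h3 h4
        omega
    · intro h
      apply Finset.mem_image.2
      refine ⟨⟨u.val, Finset.mem_range.2 h⟩, Finset.mem_attach _ _, ?_⟩
      apply Sym2.eq_iff.2
      exact Or.inl ⟨Fin.ext rfl, Fin.ext huv⟩
  have hdelAdj := deleteEdges_adjC n E₀ (Finset.range M) hmemE
  have hEsub : ↑E₀ ⊆ (SimpleGraph.pathGraph n).edgeSet := by
    intro e he
    rw [Finset.mem_coe, hE₀] at he
    obtain ⟨x, _, rfl⟩ := Finset.mem_image.1 he
    rw [SimpleGraph.mem_edgeSet, SimpleGraph.pathGraph_adj]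
    exact Or.inl rfl
  have hcardE : E₀.card = M := by
    rw [hE₀, Finset.card_image_of_injOn, Finset.card_attach, Finset.card_range]
    intro x _ y _ hxy
    rcases Sym2.eq_iff.1 hxy with ⟨ha, hb⟩ | ⟨ha, hb⟩
    · exact Subtype.ext (congrArg Fin.val ha)
    · have h3 := congrArg Fin.val ha
      have h4 := congrArg Fin.val hb
      simp only [] at h3 h4
      exact Subtype.ext (by omega)
  have hdelNum : ((SimpleGraph.pathGraph n).deleteEdges ↑E₀).domNum = (n + 2) / 3 + k := by
    rw [exact_domNum n M hM1 _ hdelAdj]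
    exact h1
  have hMemS : M ∈ {m : ℕ | ∃ E' : Finset (Sym2 (Fin n)),
      ↑E' ⊆ (SimpleGraph.pathGraph n).edgeSet ∧
      ((SimpleGraph.pathGraph n).deleteEdges ↑E').domNum = (SimpleGraph.pathGraph n).domNum + k ∧
      E'.card = m} := ⟨E₀, hEsub, by rw [hdelNum, hpath], hcardE⟩
  have hLow : ∀ m : ℕ, (∃ E' : Finset (Sym2 (Fin n)),
      ↑E' ⊆ (SimpleGraph.pathGraph n).edgeSet ∧
      ((SimpleGraph.pathGraph n).deleteEdges ↑E').domNum = (SimpleGraph.pathGraph n).domNum + k ∧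
      E'.card = m) → M ≤ m := by
    rintro m ⟨E', hsub, hγ, rfl⟩
    set cutOf : Sym2 (Fin n) → ℕ :=
      Sym2.lift ⟨fun a b => min a.val b.val, fun a b => min_comm _ _⟩ with hcut
    set C := E'.image cutOf with hC
    have hkey : ∀ u v : Fin n, u.val + 1 = v.val → (s(u, v) ∈ E' ↔ u.val ∈ C) := by
      intro u v huv
      constructor
      · intro h
        rw [hC]
        refine Finset.mem_image.2 ⟨_, h, ?_⟩
        rw [hcut, Sym2.lift_mk]
        simp only []
        omega
      · intro h
        rw [hC] at h
        obtain ⟨e, he, hce⟩ := Finset.mem_image.1 h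
        obtain ⟨a, b, hab, rfl⟩ := edge_rep n e (hsub (Finset.mem_coe.2 he))
        rw [hcut, Sym2.lift_mk] at hce
        simp only [] at hce
        have ha : a = u := Fin.ext (by omega)
        have hb : b = v := Fin.ext (by omega)
        rw [ha, hb] at he
        exact he
    have hdelAdj2 := deleteEdges_adjC n E' C hkey
    obtain ⟨D, hDdom, hDcard⟩ := EX n C hn
    have hDdom' : ((SimpleGraph.pathGraph n).deleteEdges ↑E').IsDominatingSet D := by
      intro v
      rcases hDdom v with h | ⟨u, hu, hadj⟩
      · exact Or.inl h
      · exact Or.inr ⟨u, hu, (hdelAdj2 u v).2 hadj⟩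
    have h5 := domNum_le _ D hDdom'
    rw [hγ, hpath] at h5
    have h6 : (C.filter (· < n - 1)).card ≤ E'.card :=
      le_trans (Finset.card_filter_le _ _) Finset.card_image_le
    exact h2 E'.card (by omega)
  unfold SimpleGraph.synchBondage
  apply le_antisymm
  · exact Nat.sInf_le hMemS
  · refine le_csInf ⟨M, hMemS⟩ ?_
    rintro m hm
    exact hLow m hm


end PathBondage

/-- the `k`-synchronous bondage number of the path `P_n`
(for `1 ≤ k ≤ n − ⌈n/3⌉`) is `⌊(3k−1)/2⌋`, `⌊(3k+1)/2⌋`, or `⌈(3k−1)/2⌉ = ⌊3k/2⌋`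
according to whether `n ≡ 0, 1, 2 (mod 3)`. -/
theorem synchBondage_pathGraph (n k : ℕ) (hn : 1 ≤ n) (hk : 1 ≤ k)
    (hkn : k ≤ n - (n + 2) / 3) :
    (n % 3 = 0 → (SimpleGraph.pathGraph n).synchBondage k = (3 * k - 1) / 2) ∧
    (n % 3 = 1 → (SimpleGraph.pathGraph n).synchBondage k = (3 * k + 1) / 2) ∧
    (n % 3 = 2 → (SimpleGraph.pathGraph n).synchBondage k = 3 * k / 2) := by
  refine ⟨?_, ?_, ?_⟩ <;> intro hr
  · exact PathBondage.helper n k ((3 * k - 1) / 2) hn (by omega) (by omega) (fun m hm => by omega)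
  · exact PathBondage.helper n k ((3 * k + 1) / 2) hn (by omega) (by omega) (fun m hm => by omega)
  · exact PathBondage.helper n k (3 * k / 2) hn (by omega) (by omega) (fun m hm => by omega)
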